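/- Let p = 3, n ≥ 1, and x = (x_0,…,x_{n−1}) ∈ 𝔽_3^n. Then min(x) = Π_{i=0}^{n−1} x_i^2 + Π_{i=0}^{n−1} x_i(1 − x_i) in 𝔽_3. -/

import Mathlib

/-- The maximum of the components of `x`, where elements of `ZMod p` are
compared via their canonical natural-number representatives. -/
def fmax {p n : ℕ} (x : Fin n → ZMod p) : ZMod p :=
  ((Finset.univ.sup fun i => (x i).val : ℕ) : ZMod p)

/-- The least index `i` with `x i = fmax x`, as a natural number. -/
noncomputable def argmaxN {p n : ℕ} (x : Fin n → ZMod p) : ℕ :=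
  sInf {i : ℕ | ∃ h : i < n, x ⟨i, h⟩ = fmax x}

/-- The `r`-th digit of the base-`p` expansion of `k`, as an element of `ZMod p`. -/
def digitP (p k r : ℕ) : ZMod p := (((k / p ^ r) % p : ℕ) : ZMod p)

/-- Polynomial expression of the low-pass function `χ(z < t)`. -/
def Lp (p t : ℕ) (z : ZMod p) : ZMod p :=
  ∑ k ∈ Finset.range t, (1 - (z - (k : ZMod p)) ^ (p - 1))

/-- Polynomial expression of the Kronecker delta `χ(z = t)`. -/
def deltaP (p t : ℕ) (z : ZMod p) : ZMod p := 1 - (z - (t : ZMod p)) ^ (p - 1)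

/-- The minimum of the components of `x`, via the canonical representatives. -/
noncomputable def fmin {p n : ℕ} (x : Fin n → ZMod p) : ZMod p :=
  ((sInf {m : ℕ | ∃ i, (x i).val = m} : ℕ) : ZMod p)

theorem min_p_three (n : ℕ) (hn : 1 ≤ n) (x : Fin n → ZMod 3) :
    fmin x = (∏ i, (x i) ^ 2) + ∏ i, (x i * (1 - x i)) := by
  classical
  set S : Set ℕ := {m : ℕ | ∃ i, (x i).val = m} with hS
  by_cases h0 : ∃ i, x i = 0
  · obtain ⟨i, hi⟩ := h0
    have hinf : sInf S = 0 := by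
      apply Nat.sInf_eq_zero.mpr
      left; exact ⟨i, by simp [hi]⟩
    have h1 : (∏ j, (x j) ^ 2) = 0 :=
      Finset.prod_eq_zero (Finset.mem_univ i) (by simp [hi])
    have h2 : (∏ j, (x j * (1 - x j))) = 0 :=
      Finset.prod_eq_zero (Finset.mem_univ i) (by simp [hi])
    rw [fmin, ← hS, hinf, h1, h2]; simp
  · push_neg at h0
    have hsq : ∀ j, (x j) ^ 2 = 1 := by
      have : ∀ a : ZMod 3, a ≠ 0 → a ^ 2 = 1 := by decide
      exact fun j => this _ (h0 j)
    have hp1 : (∏ j, (x j) ^ 2) = 1 := Finset.prod_eq_one fun j _ => hsq j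
    have h0notS : 0 ∉ S := by
      rintro ⟨j, hj⟩
      exact h0 j (by rwa [ZMod.val_eq_zero] at hj)
    by_cases h1 : ∃ i, x i = 1
    · obtain ⟨i, hi⟩ := h1
      have h1S : 1 ∈ S := ⟨i, by rw [hi]; decide⟩
      have hle : sInf S ≤ 1 := Nat.sInf_le h1S
      have hmem : sInf S ∈ S := Nat.sInf_mem ⟨1, h1S⟩
      have hne : sInf S ≠ 0 := fun h => h0notS (h ▸ hmem)
      have hinf : sInf S = 1 := by omega
      have h2 : (∏ j, (x j * (1 - x j))) = 0 :=
        Finset.prod_eq_zero (Finset.mem_univ i) (by simp [hi])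
      rw [fmin, ← hS, hinf, hp1, h2]; simp
    · push_neg at h1
      have hall : ∀ j, x j = 2 := by
        have : ∀ a : ZMod 3, a ≠ 0 → a ≠ 1 → a = 2 := by decide
        exact fun j => this _ (h0 j) (h1 j)
      have hSeq : ∀ m ∈ S, m = 2 := by
        rintro m ⟨j, hj⟩
        rw [hall j] at hj
        exact hj.symm.trans (by decide)
      have h2S : 2 ∈ S := ⟨⟨0, hn⟩, by rw [hall]; decide⟩
      have hinf : sInf S = 2 := le_antisymm (Nat.sInf_le h2S)
        (by have := hSeq _ (Nat.sInf_mem ⟨2, h2S⟩); omega)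
      have h2 : (∏ j, (x j * (1 - x j))) = 1 :=
        Finset.prod_eq_one fun j _ => by rw [hall j]; decide
      rw [fmin, ← hS, hinf, hp1, h2]; decide
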